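/- Let γ > −1 and δ ∈ ℝ. For every z ∈ ℝ, the series ∑_{k=0}^∞ z^k / (k! Γ(γk + δ)) defining the two-parameter Wright function W(z; γ, δ) converges absolutely (the family k ↦ z^k / (k! Γ(γk + δ)) is summable), where 1/Γ(x) is interpreted as the entire reciprocal gamma function (equal to 0 at nonpositive integers). -/

import Mathlib

open Real

/-- The terms of the series defining the two-parameter Wright function
`W(z; γ, δ) = ∑ₖ zᵏ / (k! Γ(γk + δ))`, where `1/Γ` is the entire reciprocal
gamma function (Mathlib's `Real.Gamma` vanishes at nonpositive integers, so
division by it realizes this convention). -/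
noncomputable def wrightTerm (γ δ z : ℝ) (k : ℕ) : ℝ :=
  z ^ k / ((k.factorial : ℝ) * Real.Gamma (γ * k + δ))

/-- Gautschi-type inequality via log-convexity of `Γ`. -/
lemma gamma_add_le (x s : ℝ) (hx : 0 < x) (hs0 : 0 ≤ s) (hs1 : s ≤ 1) :
    Real.Gamma (x + s) ≤ Real.Gamma x * x ^ s := by
  have hΓx : 0 < Real.Gamma x := Real.Gamma_pos_of_pos hx
  have hΓxs : 0 < Real.Gamma (x + s) := Real.Gamma_pos_of_pos (by linarith)
  have hc := Real.convexOn_log_Gamma.2 (Set.mem_Ioi.2 hx)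
    (Set.mem_Ioi.2 (by linarith : (0:ℝ) < x + 1))
    (by linarith : (0:ℝ) ≤ 1 - s) hs0 (by ring)
  simp only [smul_eq_mul, Function.comp_apply] at hc
  have harg : (1 - s) * x + s * (x + 1) = x + s := by ring
  rw [harg, Real.Gamma_add_one hx.ne', Real.log_mul hx.ne' hΓx.ne'] at hc
  have hlog : Real.log (Real.Gamma (x + s)) ≤ Real.log (Real.Gamma x) + s * Real.log x := by
    nlinarith [hc]
  calc Real.Gamma (x + s) = Real.exp (Real.log (Real.Gamma (x + s))) := (Real.exp_log hΓxs).symm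
    _ ≤ Real.exp (Real.log (Real.Gamma x) + s * Real.log x) := Real.exp_le_exp.2 hlog
    _ = Real.Gamma x * x ^ s := by
        rw [Real.exp_add, Real.exp_log hΓx, Real.rpow_def_of_pos hx, mul_comm (Real.log x) s]

/-- Reflection bound for the reciprocal Gamma function on nonpositive reals. -/
lemma abs_inv_gamma_le (x : ℝ) (hx : x ≤ 0) :
    |(Real.Gamma x)⁻¹| ≤ Real.Gamma (1 - x) / π := by
  have h1x : 0 < Real.Gamma (1 - x) := Real.Gamma_pos_of_pos (by linarith)
  have hπ : (0:ℝ) < π := Real.pi_pos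
  by_cases hΓ : Real.Gamma x = 0
  · rw [hΓ]
    simp only [inv_zero, abs_zero]
    positivity
  · have hrefl := Real.Gamma_mul_Gamma_one_sub x
    have hsin : Real.sin (π * x) ≠ 0 := by
      intro h
      rw [h, div_zero] at hrefl
      exact (mul_ne_zero hΓ h1x.ne') hrefl
    have hmul : Real.Gamma x * (Real.Gamma (1 - x) * Real.sin (π * x) / π) = 1 := by
      field_simp [hsin] at hrefl ⊢
      have hsin' : Real.sin (x * π) ≠ 0 := by rwa [mul_comm]
      field_simp at hrefl
      linear_combination hrefl
    have hinv : (Real.Gamma x)⁻¹ = Real.Gamma (1 - x) * Real.sin (π * x) / π :=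
      inv_eq_of_mul_eq_one_right hmul
    rw [hinv, abs_div, abs_of_pos hπ, abs_mul, abs_of_pos h1x]
    have hsb : |Real.sin (π * x)| ≤ 1 :=
      abs_le.mpr ⟨Real.neg_one_le_sin _, Real.sin_le_one _⟩
    have hnum : Real.Gamma (1 - x) * |Real.sin (π * x)| ≤ Real.Gamma (1 - x) := by
      nlinarith [abs_nonneg (Real.sin (π * x))]
    exact (div_le_div_iff_of_pos_right hπ).2 hnum

/-- For `γ > −1`, `δ ∈ ℝ`, the series defining the Wright function `W(z; γ, δ)`
converges absolutely for every real `z`. -/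
theorem wright_summable (γ δ : ℝ) (hγ : -1 < γ) (z : ℝ) :
    Summable (fun k : ℕ => wrightTerm γ δ z k) := by
  rcases lt_trichotomy γ 0 with hγ0 | hγ0 | hγ0
  · -- hard case: -1 < γ < 0
    set s : ℝ := -γ with hs
    have hs0 : 0 < s := by simp [hs]; linarith
    have hs1 : s < 1 := by simp [hs]; linarith
    -- majorant
    set g : ℕ → ℝ := fun k => |z| ^ k * Real.Gamma (s * k + (1 - δ)) / (k.factorial * π)
      with hg
    have hπ : (0:ℝ) < π := Real.pi_pos
    have hgsum : Summable g := by
      apply summable_of_ratio_norm_eventually_le (r := 1/2) (by norm_num)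
      have E1 : ∀ᶠ k : ℕ in Filter.atTop, (1:ℝ) ≤ s * k + (1 - δ) := by
        have : Filter.Tendsto (fun k : ℕ => s * k + (1 - δ)) Filter.atTop Filter.atTop := by
          apply Filter.Tendsto.atTop_add _ tendsto_const_nhds
          exact (tendsto_natCast_atTop_atTop (R := ℝ)).const_mul_atTop hs0
        exact this.eventually_ge_atTop 1
      have E2 : ∀ᶠ k : ℕ in Filter.atTop, s * k + (1 - δ) ≤ (k:ℝ) + 1 := by
        filter_upwards [Filter.eventually_ge_atTop (Nat.ceil ((1 - δ)/(1 - s)))] with k hk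
        have hk' : ((1 - δ)/(1 - s) : ℝ) ≤ k := le_trans (Nat.le_ceil _) (by exact_mod_cast hk)
        have := (div_le_iff₀ (by linarith : (0:ℝ) < 1 - s)).1 hk'
        nlinarith
      have E3 : ∀ᶠ k : ℕ in Filter.atTop, |z| * ((k:ℝ) + 1) ^ (s - 1) ≤ 1/2 := by
        have h0 : Filter.Tendsto (fun k : ℕ => |z| * ((k:ℝ) + 1) ^ (s - 1))
            Filter.atTop (nhds (|z| * 0)) := by
          apply Filter.Tendsto.const_mul
          have := tendsto_rpow_neg_atTop (by linarith : (0:ℝ) < 1 - s)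
          have hcomp := this.comp
            (Filter.tendsto_atTop_add_const_right Filter.atTop 1
              (tendsto_natCast_atTop_atTop (R := ℝ)))
          simpa [neg_sub, Function.comp_def] using hcomp
        rw [mul_zero] at h0
        exact (h0.eventually_le_const (by norm_num : (0:ℝ) < 1/2))
      filter_upwards [E1, E2, E3] with k hk1 hk2 hk3
      set x : ℝ := s * k + (1 - δ) with hx
      have hxpos : 0 < x := by linarith
      have hΓx : 0 < Real.Gamma x := Real.Gamma_pos_of_pos hxpos
      have harg : s * (k + 1 : ℕ) + (1 - δ) = x + s := by push_cast; ring
      have hgau : Real.Gamma (x + s) ≤ Real.Gamma x * x ^ s :=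
        gamma_add_le x s hxpos hs0.le hs1.le
      have hxs : x ^ s ≤ ((k:ℝ) + 1) ^ s :=
        Real.rpow_le_rpow (by linarith) hk2 hs0.le
      have hsplit : ((k:ℝ) + 1) ^ s = ((k:ℝ) + 1) ^ (s - 1) * ((k:ℝ) + 1) := by
        rw [← Real.rpow_add_one (by positivity : ((k:ℝ) + 1) ≠ 0) (s - 1)]
        ring_nf
      have hzx : |z| * x ^ s ≤ (1/2) * ((k:ℝ) + 1) := by
        calc |z| * x ^ s ≤ |z| * ((k:ℝ) + 1) ^ s := by
              apply mul_le_mul_of_nonneg_left hxs (abs_nonneg z)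
          _ = (|z| * ((k:ℝ) + 1) ^ (s - 1)) * ((k:ℝ) + 1) := by rw [hsplit]; ring
          _ ≤ (1/2) * ((k:ℝ) + 1) := by
              apply mul_le_mul_of_nonneg_right hk3 (by positivity)
      have hgpos : 0 ≤ g k := by
        rw [hg]
        positivity
      have hfact : ((k+1 : ℕ).factorial : ℝ) = ((k:ℝ) + 1) * k.factorial := by
        rw [Nat.factorial_succ]; push_cast; ring
      have hgk1 : g (k+1) ≤ (1/2) * g k := by
        rw [hg]
        simp only []
        rw [harg, hfact]
        have hΓb : Real.Gamma (x + s) ≤ Real.Gamma x * x ^ s := hgau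
        have key : |z| ^ (k+1) * Real.Gamma (x + s) ≤
            |z| ^ k * Real.Gamma x * ((1/2) * ((k:ℝ) + 1)) := by
          calc |z| ^ (k+1) * Real.Gamma (x + s)
              ≤ |z| ^ (k+1) * (Real.Gamma x * x ^ s) := by
                apply mul_le_mul_of_nonneg_left hΓb (by positivity)
            _ = |z| ^ k * Real.Gamma x * (|z| * x ^ s) := by ring
            _ ≤ |z| ^ k * Real.Gamma x * ((1/2) * ((k:ℝ) + 1)) := by
                apply mul_le_mul_of_nonneg_left hzx (by positivity)
        rw [div_le_iff₀ (by positivity), mul_comm ((k:ℝ)+1) (k.factorial : ℝ)]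
        have hkf : (0:ℝ) < (k.factorial : ℝ) := by positivity
        calc |z| ^ (k+1) * Real.Gamma (x + s)
            ≤ |z| ^ k * Real.Gamma x * ((1/2) * ((k:ℝ) + 1)) := key
          _ = 1/2 * (|z| ^ k * Real.Gamma x / ((k.factorial:ℝ) * π)) *
              ((k.factorial:ℝ) * ((k:ℝ)+1) * π) := by
                field_simp
      calc ‖g (k+1)‖ = g (k+1) := by
            rw [Real.norm_eq_abs, abs_of_nonneg]
            rw [hg]
            have : 0 < Real.Gamma (s * ((k:ℕ)+1:ℕ) + (1 - δ)) := by
              rw [harg]; exact Real.Gamma_pos_of_pos (by linarith)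
            positivity
        _ ≤ (1/2) * g k := hgk1
        _ ≤ (1/2) * ‖g k‖ := by
            apply mul_le_mul_of_nonneg_left (le_abs_self _) (by norm_num)
    apply Summable.of_norm_bounded_eventually_nat (g := g) hgsum
    have Ea : ∀ᶠ k : ℕ in Filter.atTop, γ * k + δ ≤ 0 := by
      filter_upwards [Filter.eventually_ge_atTop (Nat.ceil (δ / s))] with k hk
      have hk' : (δ / s : ℝ) ≤ k := le_trans (Nat.le_ceil _) (by exact_mod_cast hk)
      have := (div_le_iff₀ hs0).1 hk'
      have : δ ≤ s * k := by linarith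
      simp only [hs] at this ⊢
      linarith
    filter_upwards [Ea] with k hk
    have hb := abs_inv_gamma_le (γ * k + δ) hk
    have h1x : (1 : ℝ) - (γ * k + δ) = s * k + (1 - δ) := by simp [hs]; ring
    rw [h1x] at hb
    have : ‖wrightTerm γ δ z k‖ =
        (|z| ^ k / k.factorial) * |(Real.Gamma (γ * k + δ))⁻¹| := by
      rw [wrightTerm, Real.norm_eq_abs, div_mul_eq_div_div, div_eq_mul_inv, abs_mul,
        abs_div, abs_pow, Nat.abs_cast]
    rw [this]
    calc (|z| ^ k / k.factorial) * |(Real.Gamma (γ * k + δ))⁻¹|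
        ≤ (|z| ^ k / k.factorial) * (Real.Gamma (s * k + (1 - δ)) / π) := by
          apply mul_le_mul_of_nonneg_left hb (by positivity)
      _ = g k := by rw [hg]; field_simp
  · -- γ = 0
    subst hγ0
    have : (fun k : ℕ => wrightTerm 0 δ z k)
        = fun k : ℕ => z ^ k / k.factorial * (Real.Gamma δ)⁻¹ := by
      funext k
      simp [wrightTerm, div_mul_eq_div_div, div_eq_mul_inv]
      ring
    rw [this]
    exact (Real.summable_pow_div_factorial z).mul_right _
  · -- γ > 0
    apply Summable.of_norm_bounded_eventually_nat (g := fun k : ℕ => |z| ^ k / k.factorial)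
      (Real.summable_pow_div_factorial |z|)
    have Ea : ∀ᶠ k : ℕ in Filter.atTop, (2:ℝ) ≤ γ * k + δ := by
      filter_upwards [Filter.eventually_ge_atTop (Nat.ceil ((2 - δ)/γ))] with k hk
      have hk' : ((2 - δ)/γ : ℝ) ≤ k := le_trans (Nat.le_ceil _) (by exact_mod_cast hk)
      have := (div_le_iff₀ hγ0).1 hk'
      linarith
    filter_upwards [Ea] with k hk
    have hΓ1 : (1:ℝ) ≤ Real.Gamma (γ * k + δ) := by
      have := Real.Gamma_strictMonoOn_Ici.monotoneOn (Set.mem_Ici.2 le_rfl)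
        (Set.mem_Ici.2 hk) hk
      rwa [Real.Gamma_two] at this
    have hΓpos : 0 < Real.Gamma (γ * k + δ) := by linarith
    rw [wrightTerm, Real.norm_eq_abs, abs_div, abs_pow]
    have hden : |((k.factorial : ℝ) * Real.Gamma (γ * k + δ))|
        = (k.factorial : ℝ) * Real.Gamma (γ * k + δ) := abs_of_pos (by positivity)
    rw [hden]
    have hkf : (0:ℝ) < (k.factorial : ℝ) := by positivity
    apply div_le_div_of_nonneg_left (by positivity) hkf
    nlinarith
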